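/- Fix a real number q with 0 < q < 1. For every nonzero half-integer k: λ_k² ≥ q⁴, and q^{−8k} ≤ λ_k²·(2 − q²)²/q⁴; consequently λ_k² ≥ q⁴·(2 − q²)^{−2}·max(q^{−8k}, 1). -/

import Mathlib

/-- `lam q k` is the quantity `λ_k = q² (q^{-4k} - 1)/(1 - q²)` (real exponents via `rpow`). -/
noncomputable def lam (q k : ℝ) : ℝ := q ^ 2 * (q ^ (-4 * k) - 1) / (1 - q ^ 2)

/-- `cc q m k` is the quantity `c_k` of the spin-`m` representation of quantum `SU_q(2)`:
`c_k = q (1-q²)⁻¹ √((q^{-2k} - q^{2m})(q^{-2m} - q^{-2(k-1)}))` for `-m ≤ k ≤ m`, and `0`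
otherwise (in particular `c_{-m-1} = c_{m+1} = 0`). -/
noncomputable def cc (q m k : ℝ) : ℝ :=
  if -m ≤ k ∧ k ≤ m then
    q / (1 - q ^ 2) *
      Real.sqrt ((q ^ (-2 * k) - q ^ (2 * m)) * (q ^ (-2 * m) - q ^ (-2 * (k - 1))))
  else 0

/-- `nu q m k` is the Laplacian eigenvalue `ν_k = c_{k+1}² + λ_k² + q² c_k²`. -/
noncomputable def nu (q m k : ℝ) : ℝ :=
  cc q m (k + 1) ^ 2 + lam q k ^ 2 + q ^ 2 * cc q m k ^ 2

/-- `k` is a half-integer. -/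
def IsHalfInt (k : ℝ) : Prop := ∃ n : ℤ, 2 * k = (n : ℝ)

set_option maxHeartbeats 1000000 in
/-- The bounds on `λ_k` from the proof of Theorem 8.2 of the paper: for `0 < q < 1` and every
nonzero half-integer `k`, `λ_k² ≥ q⁴`, `q^{-8k} ≤ λ_k² (2 - q²)²/q⁴`, and consequently
`λ_k² ≥ q⁴ (2 - q²)⁻² max(q^{-8k}, 1)`. -/
theorem lam_sq_lower_bounds
    (q : ℝ) (hq0 : 0 < q) (hq1 : q < 1)
    (k : ℝ) (hk : IsHalfInt k) (hk0 : k ≠ 0) :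
    q ^ 4 ≤ lam q k ^ 2 ∧
    q ^ (-8 * k) ≤ lam q k ^ 2 * (2 - q ^ 2) ^ 2 / q ^ 4 ∧
    q ^ 4 * ((2 - q ^ 2) ^ 2)⁻¹ * max (q ^ (-8 * k)) 1 ≤ lam q k ^ 2 := by
  obtain ⟨n, hn⟩ := hk
  have ha : (0:ℝ) < 1 - q ^ 2 := by nlinarith
  have hn0 : n ≠ 0 := by
    rintro rfl; apply hk0; push_cast at hn; linarith
  have hp2 : q ^ (2:ℤ) = q ^ 2 := by
    norm_cast
  set t : ℝ := q ^ (-4 * k) with ht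
  have htz : t = q ^ (-2 * n : ℤ) := by
    rw [ht, ← Real.rpow_intCast q (-2 * n)]
    congr 1; push_cast; linarith
  have htpos : 0 < t := by rw [htz]; positivity
  have hs : q ^ (-8 * k) = t ^ 2 := by
    rw [ht, ← Real.rpow_natCast (q ^ (-4 * k)) 2, ← Real.rpow_mul hq0.le]
    congr 1; push_cast; ring
  have hlam : lam q k = q ^ 2 * (t - 1) / (1 - q ^ 2) := rfl
  have hkey : (1 ≤ t * q ^ 2 ∧ 1 - q ^ 2 ≤ t - 1) ∨ (t ≤ q ^ 2) := by
    rcases lt_or_gt_of_ne hn0 with hneg | hpos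
    · right
      rw [htz, ← hp2]
      exact zpow_le_zpow_right_of_le_one₀ hq0 hq1.le (by omega)
    · left
      have h2 : q ^ (-2:ℤ) ≤ t := by
        rw [htz]; exact zpow_le_zpow_right_of_le_one₀ hq0 hq1.le (by omega)
      have h3 : q ^ (-2:ℤ) = (q ^ 2)⁻¹ := by
        rw [zpow_neg, hp2]
      have hq2 : 0 < q ^ 2 := by positivity
      rw [h3] at h2
      have h4 : 1 ≤ t * q ^ 2 := by
        calc (1:ℝ) = (q ^ 2)⁻¹ * q ^ 2 := by field_simp
          _ ≤ t * q ^ 2 := by gcongr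
      have h5 : (1:ℝ) ≤ q ^ 2 * t := by linarith [h4, mul_comm t (q ^ 2)]
      refine ⟨h4, ?_⟩
      have h6 : (1:ℝ) < (q ^ 2)⁻¹ := by
        rw [lt_inv_comm₀ (by norm_num) hq2]; nlinarith
      nlinarith [h2, h6]
  rw [hs, hlam]
  clear_value t
  clear ht htz hs hn hlam hk0
  have habs : (1 - q ^ 2) ^ 2 ≤ (t - 1) ^ 2 := by
    rcases hkey with ⟨h1, h2⟩ | h
    · nlinarith
    · nlinarith
  have hq4 : (0:ℝ) < q ^ 4 := by positivity
  have hlamsq : (q ^ 2 * (t - 1) / (1 - q ^ 2)) ^ 2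
      = (q ^ 2 * (t - 1)) ^ 2 / (1 - q ^ 2) ^ 2 := by rw [div_pow]
  have g1 : q ^ 4 ≤ (q ^ 2 * (t - 1) / (1 - q ^ 2)) ^ 2 := by
    rw [hlamsq, le_div_iff₀ (by positivity)]
    nlinarith [mul_le_mul_of_nonneg_left habs hq4.le]
  have hfac : t ^ 2 * (1 - q ^ 2) ^ 2 ≤ (t - 1) ^ 2 * (2 - q ^ 2) ^ 2 := by
    rcases hkey with ⟨h1, h2⟩ | h
    · nlinarith [sq_nonneg (q ^ 2 - 1), sq_nonneg (t * q ^ 2 - 1), mul_pos htpos htpos]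
    · nlinarith [sq_nonneg (1 - t), mul_pos htpos htpos]
  have g2 : t ^ 2 ≤ (q ^ 2 * (t - 1) / (1 - q ^ 2)) ^ 2 * (2 - q ^ 2) ^ 2 / q ^ 4 := by
    rw [hlamsq, div_mul_eq_mul_div, div_div, le_div_iff₀ (by positivity)]
    nlinarith [mul_le_mul_of_nonneg_left hfac hq4.le]
  refine ⟨g1, g2, ?_⟩
  have h2q : (1:ℝ) ≤ (2 - q ^ 2) ^ 2 := by nlinarith
  have hLpos : (0:ℝ) < (2 - q ^ 2) ^ 2 := pow_pos (by nlinarith) 2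
  have hone : (1:ℝ) ≤ (q ^ 2 * (t - 1) / (1 - q ^ 2)) ^ 2 * (2 - q ^ 2) ^ 2 / q ^ 4 := by
    rw [le_div_iff₀ hq4]
    nlinarith [g1, h2q]
  have hmax : max (t ^ 2) 1
      ≤ (q ^ 2 * (t - 1) / (1 - q ^ 2)) ^ 2 * (2 - q ^ 2) ^ 2 / q ^ 4 := max_le g2 hone
  calc q ^ 4 * ((2 - q ^ 2) ^ 2)⁻¹ * max (t ^ 2) 1
      ≤ q ^ 4 * ((2 - q ^ 2) ^ 2)⁻¹ *
        ((q ^ 2 * (t - 1) / (1 - q ^ 2)) ^ 2 * (2 - q ^ 2) ^ 2 / q ^ 4) := by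
        gcongr
    _ = (q ^ 2 * (t - 1) / (1 - q ^ 2)) ^ 2 := by
        field_simp [(ne_of_gt (by nlinarith) : (2:ℝ) - q ^ 2 ≠ 0), ha.ne']
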